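/- Let G − v be a fold of G witnessed by u, let H be a graph, let α and β be the ascending and descending closure operators from the previous items, on the face poset P of Hom(G,H) and on X = {η ∈ P : η(u) ⊆ η(v)} respectively. Then α maps P into X, and the composite β ∘ α : P → P equals the map induced by precomposition with the inclusion i : G − v → G, i.e., (β∘α)(η) is the function sending v to η(u) and agreeing with η elsewhere. -/

import Mathlib

open Classical in
/-- With `α` and `β` the ascending/descending closure operators associated to a
fold `G − v` of `G` (witnessed by `u`) and a graph `H`: `α` maps the face poset
`P` of `Hom(G,H)` into `X = {η ∈ P : η(u) ⊆ η(v)}`, and the composite `β ∘ α`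
is the map induced by the inclusion `i : G−v → G`, sending `η` to the function
equal to `η(u)` at `v` and agreeing with `η` elsewhere. -/
theorem stmt_10 {VG VH : Type*} (G : SimpleGraph VG) (H : SimpleGraph VH)
    (v u : VG) (huv : u ≠ v) (hfold : G.neighborSet v ⊆ G.neighborSet u) :
    letI S : Set (VG → Set VH) :=
      {η | (∀ x, (η x).Nonempty) ∧
        ∀ x y, G.Adj x y → ∀ a ∈ η x, ∀ b ∈ η y, H.Adj a b}
    letI X : Set (VG → Set VH) := {η ∈ S | η u ⊆ η v}
    letI α : (VG → Set VH) → (VG → Set VH) :=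
      fun η x => if x = v then η u ∪ η v else η x
    letI β : (VG → Set VH) → (VG → Set VH) :=
      fun η x => if x = v then η u else η x
    (∀ η ∈ S, α η ∈ X) ∧
    (∀ η ∈ S, β (α η) = fun x => if x = v then η u else η x) := by
  constructor
  · rintro η ⟨hne, hadj⟩
    refine ⟨⟨?_, ?_⟩, ?_⟩
    · intro x
      dsimp only
      split
      · exact (hne u).mono Set.subset_union_left
      · exact hne x
    · intro x y hxy a ha b hb
      dsimp only at ha hb
      split_ifs at ha hb with h1 h2 h2
      · rw [h1, h2] at hxy; exact (G.loopless.irrefl v hxy).elim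
      · rw [h1] at hxy
        rcases ha with ha | ha
        · exact hadj u y (hfold hxy) a ha b hb
        · exact hadj v y hxy a ha b hb
      · rw [h2] at hxy
        rcases hb with hb | hb
        · exact hadj x u (hfold hxy.symm).symm a ha b hb
        · exact hadj x v hxy a ha b hb
      · exact hadj x y hxy a ha b hb
    · intro a ha
      simp only [if_neg huv] at ha ⊢
      simp [ha]
  · intro η hη
    funext x
    dsimp only
    rcases eq_or_ne x v with rfl | h
    · simp [if_neg huv]
    · simp [h]
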